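/- Let π be an unsigned permutation of size n with b_τ(π) transposition breakpoints, let π' be the unsigned permutation of size 2n defined by π'_{2i−1} = 2π_i − 1 and π'_{2i} = 2π_i for 1 ≤ i ≤ n, and let w_ρ, w_τ be positive weights with w_τ/w_ρ ≤ 3/2. Then there exists a sequence S of transpositions transforming π into ι^n with 3·|S| = b_τ(π) if and only if 3·d^w_{M6}(π') ≤ w_τ · b_τ(π), where M6 = {reversals, transpositions, inverse transpositions, revrevs} acts on unsigned permutations of size 2n. -/

import Mathlib

/-- The four kinds of rearrangement operations considered:
reversals, transpositions, inverse transpositions and revrevs. -/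
inductive RearrOp : Type
  | rev
  | transp
  | invtransp
  | revrev
deriving DecidableEq

/-- `π` is (the extended version of) a signed permutation of size `n`:
`π 0 = +0`, `π (n+1) = +(n+1)`, and on positions `1, …, n` the values have pairwise
distinct absolute values lying in `{1, …, n}`. -/
def IsSPerm (n : ℕ) (π : ℕ → ℤ) : Prop :=
  π 0 = 0 ∧ π (n + 1) = (n : ℤ) + 1 ∧
  (∀ i : ℕ, 1 ≤ i → i ≤ n → 1 ≤ |π i| ∧ |π i| ≤ (n : ℤ)) ∧
  (∀ i j : ℕ, 1 ≤ i → i ≤ n → 1 ≤ j → j ≤ n → |π i| = |π j| → i = j)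

/-- `π` is (the extended version of) an unsigned permutation of size `n`. -/
def IsUPerm (n : ℕ) (π : ℕ → ℕ) : Prop :=
  π 0 = 0 ∧ π (n + 1) = n + 1 ∧
  (∀ i : ℕ, 1 ≤ i → i ≤ n → 1 ≤ π i ∧ π i ≤ n) ∧
  (∀ i j : ℕ, 1 ≤ i → i ≤ n → 1 ≤ j → j ≤ n → π i = π j → i = j)

/-- Signed reversal `ρ(i,j)`, `1 ≤ i ≤ j ≤ n`: replaces `(π_i … π_j)` by `(−π_j … −π_i)`. -/
def SRev (n : ℕ) (π π' : ℕ → ℤ) : Prop :=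
  ∃ i j : ℕ, 1 ≤ i ∧ i ≤ j ∧ j ≤ n ∧
    (∀ p : ℕ, i ≤ p → p ≤ j → π' p = - π (i + j - p)) ∧
    (∀ p : ℕ, p < i ∨ j < p → π' p = π p)

/-- Transposition `τ(i,j,k)`, `1 ≤ i < j < k ≤ n+1`: exchanges the adjacent segments
`(π_i … π_{j−1})` and `(π_j … π_{k−1})`. -/
def STransp (n : ℕ) (π π' : ℕ → ℤ) : Prop :=
  ∃ i j k : ℕ, 1 ≤ i ∧ i < j ∧ j < k ∧ k ≤ n + 1 ∧
    (∀ p : ℕ, i ≤ p → p < i + (k - j) → π' p = π (p + (j - i))) ∧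
    (∀ p : ℕ, i + (k - j) ≤ p → p < k → π' p = π (p - (k - j))) ∧
    (∀ p : ℕ, p < i ∨ k ≤ p → π' p = π p)

/-- Signed inverse transposition (type 1 or type 2): exchanges the two adjacent segments
`(π_i … π_{j−1})` and `(π_j … π_{k−1})` and additionally reverses (and negates) one of them. -/
def SInvTransp (n : ℕ) (π π' : ℕ → ℤ) : Prop :=
  ∃ i j k : ℕ, 1 ≤ i ∧ i < j ∧ j < k ∧ k ≤ n + 1 ∧
    (((∀ p : ℕ, i ≤ p → p < i + (k - j) → π' p = π (p + (j - i))) ∧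
      (∀ p : ℕ, i + (k - j) ≤ p → p < k → π' p = - π (i + k - 1 - p))) ∨
     ((∀ p : ℕ, i ≤ p → p < i + (k - j) → π' p = - π (i + k - 1 - p)) ∧
      (∀ p : ℕ, i + (k - j) ≤ p → p < k → π' p = π (p - (k - j))))) ∧
    (∀ p : ℕ, p < i ∨ k ≤ p → π' p = π p)

/-- Signed revrev `ρρ(i,j,k)`: reverses (and negates) each of the two adjacent segments
`(π_i … π_{j−1})` and `(π_j … π_{k−1})` in place, without exchanging them. -/
def SRevRev (n : ℕ) (π π' : ℕ → ℤ) : Prop :=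
  ∃ i j k : ℕ, 1 ≤ i ∧ i < j ∧ j < k ∧ k ≤ n + 1 ∧
    (∀ p : ℕ, i ≤ p → p < j → π' p = - π (i + j - 1 - p)) ∧
    (∀ p : ℕ, j ≤ p → p < k → π' p = - π (j + k - 1 - p)) ∧
    (∀ p : ℕ, p < i ∨ k ≤ p → π' p = π p)

/-- Unsigned reversal `ρ(i,j)`. -/
def URev (n : ℕ) (π π' : ℕ → ℕ) : Prop :=
  ∃ i j : ℕ, 1 ≤ i ∧ i ≤ j ∧ j ≤ n ∧
    (∀ p : ℕ, i ≤ p → p ≤ j → π' p = π (i + j - p)) ∧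
    (∀ p : ℕ, p < i ∨ j < p → π' p = π p)

/-- Unsigned transposition `τ(i,j,k)`. -/
def UTransp (n : ℕ) (π π' : ℕ → ℕ) : Prop :=
  ∃ i j k : ℕ, 1 ≤ i ∧ i < j ∧ j < k ∧ k ≤ n + 1 ∧
    (∀ p : ℕ, i ≤ p → p < i + (k - j) → π' p = π (p + (j - i))) ∧
    (∀ p : ℕ, i + (k - j) ≤ p → p < k → π' p = π (p - (k - j))) ∧
    (∀ p : ℕ, p < i ∨ k ≤ p → π' p = π p)

/-- Unsigned inverse transposition (type 1 or type 2). -/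
def UInvTransp (n : ℕ) (π π' : ℕ → ℕ) : Prop :=
  ∃ i j k : ℕ, 1 ≤ i ∧ i < j ∧ j < k ∧ k ≤ n + 1 ∧
    (((∀ p : ℕ, i ≤ p → p < i + (k - j) → π' p = π (p + (j - i))) ∧
      (∀ p : ℕ, i + (k - j) ≤ p → p < k → π' p = π (i + k - 1 - p))) ∨
     ((∀ p : ℕ, i ≤ p → p < i + (k - j) → π' p = π (i + k - 1 - p)) ∧
      (∀ p : ℕ, i + (k - j) ≤ p → p < k → π' p = π (p - (k - j))))) ∧
    (∀ p : ℕ, p < i ∨ k ≤ p → π' p = π p)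

/-- Unsigned revrev `ρρ(i,j,k)`. -/
def URevRev (n : ℕ) (π π' : ℕ → ℕ) : Prop :=
  ∃ i j k : ℕ, 1 ≤ i ∧ i < j ∧ j < k ∧ k ≤ n + 1 ∧
    (∀ p : ℕ, i ≤ p → p < j → π' p = π (i + j - 1 - p)) ∧
    (∀ p : ℕ, j ≤ p → p < k → π' p = π (j + k - 1 - p)) ∧
    (∀ p : ℕ, p < i ∨ k ≤ p → π' p = π p)

def sOpRel (n : ℕ) : RearrOp → (ℕ → ℤ) → (ℕ → ℤ) → Prop
  | RearrOp.rev => SRev n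
  | RearrOp.transp => STransp n
  | RearrOp.invtransp => SInvTransp n
  | RearrOp.revrev => SRevRev n

def uOpRel (n : ℕ) : RearrOp → (ℕ → ℕ) → (ℕ → ℕ) → Prop
  | RearrOp.rev => URev n
  | RearrOp.transp => UTransp n
  | RearrOp.invtransp => UInvTransp n
  | RearrOp.revrev => URevRev n

/-- The list of operations `l` transforms the signed permutation `π` into the identity. -/
def SSorts (n : ℕ) : List RearrOp → (ℕ → ℤ) → Prop
  | [], π => ∀ p : ℕ, p ≤ n + 1 → π p = (p : ℤ)
  | op :: l, π => ∃ π' : ℕ → ℤ, sOpRel n op π π' ∧ SSorts n l π'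

/-- The list of operations `l` transforms the unsigned permutation `π` into the identity. -/
def USorts (n : ℕ) : List RearrOp → (ℕ → ℕ) → Prop
  | [], π => ∀ p : ℕ, p ≤ n + 1 → π p = p
  | op :: l, π => ∃ π' : ℕ → ℕ, uOpRel n op π π' ∧ USorts n l π'

/-- A sequence of `s` (unsigned) transpositions transforms `π` into the identity. -/
def UTranspSorts (n : ℕ) : ℕ → (ℕ → ℕ) → Prop
  | 0, π => ∀ p : ℕ, p ≤ n + 1 → π p = p
  | s + 1, π => ∃ π' : ℕ → ℕ, UTransp n π π' ∧ UTranspSorts n s π'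

/-- The cost of an operation: `wr` for a reversal, `wt` for a transposition,
inverse transposition or revrev. -/
noncomputable def opCost (wr wt : ℝ) (op : RearrOp) : ENNReal :=
  if op = RearrOp.rev then ENNReal.ofReal wr else ENNReal.ofReal wt

/-- The total cost of a sequence of operations. -/
noncomputable def seqCost (wr wt : ℝ) (l : List RearrOp) : ENNReal :=
  (l.map (opCost wr wt)).sum

/-- The weighted distance `d^w_M(π)` for a signed permutation `π`: the minimum total cost
of a sequence of operations from the model `M` transforming `π` into the identity
(`∞` if no such sequence exists). -/
noncomputable def sWDist (n : ℕ) (M : Set RearrOp) (wr wt : ℝ) (π : ℕ → ℤ) : ENNReal :=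
  sInf {c : ENNReal |
    ∃ l : List RearrOp, (∀ op ∈ l, op ∈ M) ∧ SSorts n l π ∧ c = seqCost wr wt l}

/-- The weighted distance `d^w_M(π)` for an unsigned permutation `π`. -/
noncomputable def uWDist (n : ℕ) (M : Set RearrOp) (wr wt : ℝ) (π : ℕ → ℕ) : ENNReal :=
  sInf {c : ENNReal |
    ∃ l : List RearrOp, (∀ op ∈ l, op ∈ M) ∧ USorts n l π ∧ c = seqCost wr wt l}

/-- `b(π)`: number of (signed) breakpoints of the signed permutation `π`. -/
def bS (n : ℕ) (π : ℕ → ℤ) : ℕ :=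
  ((Finset.range (n + 1)).filter (fun i => π (i + 1) - π i ≠ 1)).card

/-- `b(π)`: number of unsigned-reversal breakpoints, i.e. pairs with `|π_{i+1} − π_i| ≠ 1`. -/
def bU (n : ℕ) (π : ℕ → ℕ) : ℕ :=
  ((Finset.range (n + 1)).filter
    (fun i => ¬ (π (i + 1) = π i + 1 ∨ π i = π (i + 1) + 1))).card

/-- `b_τ(π)`: number of transposition breakpoints, i.e. pairs with `π_{i+1} − π_i ≠ 1`. -/
def bTU (n : ℕ) (π : ℕ → ℕ) : ℕ :=
  ((Finset.range (n + 1)).filter (fun i => π (i + 1) ≠ π i + 1)).card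

def M1 : Set RearrOp := {RearrOp.transp, RearrOp.invtransp}
def M2 : Set RearrOp := {RearrOp.rev, RearrOp.transp, RearrOp.invtransp}
def M3 : Set RearrOp := {RearrOp.transp, RearrOp.revrev}
def M4 : Set RearrOp := {RearrOp.rev, RearrOp.transp, RearrOp.revrev}
def M5 : Set RearrOp := {RearrOp.transp, RearrOp.invtransp, RearrOp.revrev}
def M6 : Set RearrOp := {RearrOp.rev, RearrOp.transp, RearrOp.invtransp, RearrOp.revrev}

/-! ### Auxiliary machinery for the proof -/

section AuxProof

/-- The set of unsigned-reversal breakpoints. -/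
def bset (N : ℕ) (σ : ℕ → ℕ) : Finset ℕ :=
  (Finset.range (N + 1)).filter
    (fun i => ¬ (σ (i + 1) = σ i + 1 ∨ σ i = σ (i + 1) + 1))

lemma bU_eq_bset (N : ℕ) (σ : ℕ → ℕ) : bU N σ = (bset N σ).card := rfl

lemma mem_bset {N : ℕ} {σ : ℕ → ℕ} {p : ℕ} :
    p ∈ bset N σ ↔ p ≤ N ∧ ¬ (σ (p + 1) = σ p + 1 ∨ σ p = σ (p + 1) + 1) := by
  simp [bset, Nat.lt_succ_iff]

lemma card_triple_le (a b c : ℕ) : ({a, b, c} : Finset ℕ).card ≤ 3 := by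
  have h1 := Finset.card_insert_le a ({b, c} : Finset ℕ)
  have h2 := Finset.card_insert_le b ({c} : Finset ℕ)
  simp at h1 h2
  omega

lemma card_pair_le (a b : ℕ) : ({a, b} : Finset ℕ).card ≤ 2 := by
  have h1 := Finset.card_insert_le a ({b} : Finset ℕ)
  simp at h1
  omega

lemma inter_card_le {s B : Finset ℕ} {e : ℕ} (heB : e ∈ B) (hes : e ∉ s) :
    (s ∩ B).card + 1 ≤ B.card := by
  have hsub : s ∩ B ⊆ B.erase e := by
    intro x hx
    rw [Finset.mem_inter] at hx
    rw [Finset.mem_erase]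
    exact ⟨fun h => hes (h ▸ hx.1), hx.2⟩
  have h1 := Finset.card_le_card hsub
  rw [Finset.card_erase_of_mem heB] at h1
  have h2 : 1 ≤ B.card := Finset.card_pos.mpr ⟨e, heB⟩
  omega

lemma sdiff_card_le {s B : Finset ℕ} {q : ℕ} (hq : q ∈ s) (hqB : q ∈ B) :
    (s \ B).card + 1 ≤ s.card := by
  have hsub : s \ B ⊆ s.erase q := by
    intro x hx
    rw [Finset.mem_sdiff] at hx
    rw [Finset.mem_erase]
    exact ⟨fun h => hx.2 (h ▸ hqB), hx.1⟩
  have h1 := Finset.card_le_card hsub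
  rw [Finset.card_erase_of_mem hq] at h1
  have h2 : 1 ≤ s.card := Finset.card_pos.mpr ⟨q, hq⟩
  omega

lemma card_le_helper {s t B : Finset ℕ} (f : ℕ → ℕ)
    (hf : ∀ p ∈ s, p ∉ B → f p ∈ t)
    (hinj : ∀ p ∈ s, p ∉ B → ∀ q ∈ s, q ∉ B → f p = f q → p = q) :
    s.card ≤ t.card + (s ∩ B).card := by
  have h1 : (s \ B).card + (s ∩ B).card = s.card := Finset.card_sdiff_add_card_inter s B
  have h2 : (s \ B).card ≤ t.card := by
    apply Finset.card_le_card_of_injOn f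
    · intro p hp
      rw [Finset.mem_coe, Finset.mem_sdiff] at hp
      exact hf p hp.1 hp.2
    · intro p hp q hq hfq
      simp only [Finset.coe_sdiff, Set.mem_diff, Finset.mem_coe] at hp hq
      exact hinj p hp.1 hp.2 q hq.1 hq.2 hfq
  omega

lemma rev_count (N i j : ℕ) (σ σ₁ : ℕ → ℕ)
    (h1 : 1 ≤ i) (h2 : i ≤ j) (h3 : j ≤ N)
    (hIn : ∀ p, i ≤ p → p ≤ j → σ₁ p = σ (i + j - p))
    (hOut : ∀ p, p < i ∨ j < p → σ₁ p = σ p) :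
    (bset N σ).card ≤ ((bset N σ₁) \ ({i - 1, j} : Finset ℕ)).card
      + ((bset N σ) ∩ ({i - 1, j} : Finset ℕ)).card := by
  apply card_le_helper (fun p => if i ≤ p ∧ p + 1 ≤ j then i + j - 1 - p else p)
  · intro p hp hpB
    rw [mem_bset] at hp
    simp only [Finset.mem_insert, Finset.mem_singleton, not_or] at hpB
    obtain ⟨hpN, hbad⟩ := hp
    rw [Finset.mem_sdiff, mem_bset]
    simp only [Finset.mem_insert, Finset.mem_singleton, not_or]
    by_cases hc1 : i ≤ p ∧ p + 1 ≤ j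
    · rw [if_pos hc1]
      have e1 : σ₁ (i + j - 1 - p) = σ (p + 1) := by
        rw [hIn (i + j - 1 - p) (by omega) (by omega)]
        congr 1; omega
      have e2 : σ₁ (i + j - 1 - p + 1) = σ p := by
        rw [hIn (i + j - 1 - p + 1) (by omega) (by omega)]
        congr 1; omega
      refine ⟨⟨by omega, by rw [e1, e2]; tauto⟩, by omega, by omega⟩
    · rw [if_neg hc1]
      have hout : p + 1 < i ∨ j < p := by omega
      have e1 : σ₁ p = σ p := hOut p (by omega)
      have e2 : σ₁ (p + 1) = σ (p + 1) := hOut (p + 1) (by omega)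
      refine ⟨⟨by omega, by rw [e1, e2]; tauto⟩, by omega, by omega⟩
  · intro p hp hpB q hq hqB hfq
    rw [mem_bset] at hp hq
    simp only [Finset.mem_insert, Finset.mem_singleton, not_or] at hpB hqB
    split_ifs at hfq <;> omega

lemma transp_count (N i j k : ℕ) (σ σ₁ : ℕ → ℕ)
    (h1 : 1 ≤ i) (h2 : i < j) (h3 : j < k) (h4 : k ≤ N + 1)
    (hA : ∀ p, i ≤ p → p < i + (k - j) → σ₁ p = σ (p + (j - i)))
    (hB : ∀ p, i + (k - j) ≤ p → p < k → σ₁ p = σ (p - (k - j)))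
    (hC : ∀ p, p < i ∨ k ≤ p → σ₁ p = σ p) :
    (bset N σ).card ≤ ((bset N σ₁) \ ({i - 1, i + (k - j) - 1, k - 1} : Finset ℕ)).card
      + ((bset N σ) ∩ ({i - 1, j - 1, k - 1} : Finset ℕ)).card := by
  apply card_le_helper (fun p => if i ≤ p ∧ p + 2 ≤ j then p + (k - j)
    else if j ≤ p ∧ p + 2 ≤ k then p - (j - i) else p)
  · intro p hp hpB
    rw [mem_bset] at hp
    simp only [Finset.mem_insert, Finset.mem_singleton, not_or] at hpB
    obtain ⟨hpN, hbad⟩ := hp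
    rw [Finset.mem_sdiff, mem_bset]
    simp only [Finset.mem_insert, Finset.mem_singleton, not_or]
    by_cases hc1 : i ≤ p ∧ p + 2 ≤ j
    · rw [if_pos hc1]
      have e1 : σ₁ (p + (k - j)) = σ p := by
        rw [hB (p + (k - j)) (by omega) (by omega)]
        congr 1; omega
      have e2 : σ₁ (p + (k - j) + 1) = σ (p + 1) := by
        rw [hB (p + (k - j) + 1) (by omega) (by omega)]
        congr 1; omega
      refine ⟨⟨by omega, by rw [e1, e2]; tauto⟩, by omega, by omega, by omega⟩
    · rw [if_neg hc1]
      by_cases hc2 : j ≤ p ∧ p + 2 ≤ k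
      · rw [if_pos hc2]
        have e1 : σ₁ (p - (j - i)) = σ p := by
          rw [hA (p - (j - i)) (by omega) (by omega)]
          congr 1; omega
        have e2 : σ₁ (p - (j - i) + 1) = σ (p + 1) := by
          rw [hA (p - (j - i) + 1) (by omega) (by omega)]
          congr 1; omega
        refine ⟨⟨by omega, by rw [e1, e2]; tauto⟩, by omega, by omega, by omega⟩
      · rw [if_neg hc2]
        have hout : p + 1 < i ∨ k ≤ p := by omega
        have e1 : σ₁ p = σ p := hC p (by omega)
        have e2 : σ₁ (p + 1) = σ (p + 1) := hC (p + 1) (by omega)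
        refine ⟨⟨by omega, by rw [e1, e2]; tauto⟩, by omega, by omega, by omega⟩
  · intro p hp hpB q hq hqB hfq
    rw [mem_bset] at hp hq
    simp only [Finset.mem_insert, Finset.mem_singleton, not_or] at hpB hqB
    split_ifs at hfq <;> omega

lemma invtransp1_count (N i j k : ℕ) (σ σ₁ : ℕ → ℕ)
    (h1 : 1 ≤ i) (h2 : i < j) (h3 : j < k) (h4 : k ≤ N + 1)
    (hA : ∀ p, i ≤ p → p < i + (k - j) → σ₁ p = σ (p + (j - i)))
    (hB : ∀ p, i + (k - j) ≤ p → p < k → σ₁ p = σ (i + k - 1 - p))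
    (hC : ∀ p, p < i ∨ k ≤ p → σ₁ p = σ p) :
    (bset N σ).card ≤ ((bset N σ₁) \ ({i - 1, i + (k - j) - 1, k - 1} : Finset ℕ)).card
      + ((bset N σ) ∩ ({i - 1, j - 1, k - 1} : Finset ℕ)).card := by
  apply card_le_helper (fun p => if i ≤ p ∧ p + 2 ≤ j then i + k - 2 - p
    else if j ≤ p ∧ p + 2 ≤ k then p - (j - i) else p)
  · intro p hp hpB
    rw [mem_bset] at hp
    simp only [Finset.mem_insert, Finset.mem_singleton, not_or] at hpB
    obtain ⟨hpN, hbad⟩ := hp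
    rw [Finset.mem_sdiff, mem_bset]
    simp only [Finset.mem_insert, Finset.mem_singleton, not_or]
    by_cases hc1 : i ≤ p ∧ p + 2 ≤ j
    · rw [if_pos hc1]
      have e1 : σ₁ (i + k - 2 - p) = σ (p + 1) := by
        rw [hB (i + k - 2 - p) (by omega) (by omega)]
        congr 1; omega
      have e2 : σ₁ (i + k - 2 - p + 1) = σ p := by
        rw [hB (i + k - 2 - p + 1) (by omega) (by omega)]
        congr 1; omega
      refine ⟨⟨by omega, by rw [e1, e2]; tauto⟩, by omega, by omega, by omega⟩
    · rw [if_neg hc1]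
      by_cases hc2 : j ≤ p ∧ p + 2 ≤ k
      · rw [if_pos hc2]
        have e1 : σ₁ (p - (j - i)) = σ p := by
          rw [hA (p - (j - i)) (by omega) (by omega)]
          congr 1; omega
        have e2 : σ₁ (p - (j - i) + 1) = σ (p + 1) := by
          rw [hA (p - (j - i) + 1) (by omega) (by omega)]
          congr 1; omega
        refine ⟨⟨by omega, by rw [e1, e2]; tauto⟩, by omega, by omega, by omega⟩
      · rw [if_neg hc2]
        have hout : p + 1 < i ∨ k ≤ p := by omega
        have e1 : σ₁ p = σ p := hC p (by omega)
        have e2 : σ₁ (p + 1) = σ (p + 1) := hC (p + 1) (by omega)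
        refine ⟨⟨by omega, by rw [e1, e2]; tauto⟩, by omega, by omega, by omega⟩
  · intro p hp hpB q hq hqB hfq
    rw [mem_bset] at hp hq
    simp only [Finset.mem_insert, Finset.mem_singleton, not_or] at hpB hqB
    split_ifs at hfq <;> omega

lemma invtransp2_count (N i j k : ℕ) (σ σ₁ : ℕ → ℕ)
    (h1 : 1 ≤ i) (h2 : i < j) (h3 : j < k) (h4 : k ≤ N + 1)
    (hA : ∀ p, i ≤ p → p < i + (k - j) → σ₁ p = σ (i + k - 1 - p))
    (hB : ∀ p, i + (k - j) ≤ p → p < k → σ₁ p = σ (p - (k - j)))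
    (hC : ∀ p, p < i ∨ k ≤ p → σ₁ p = σ p) :
    (bset N σ).card ≤ ((bset N σ₁) \ ({i - 1, i + (k - j) - 1, k - 1} : Finset ℕ)).card
      + ((bset N σ) ∩ ({i - 1, j - 1, k - 1} : Finset ℕ)).card := by
  apply card_le_helper (fun p => if i ≤ p ∧ p + 2 ≤ j then p + (k - j)
    else if j ≤ p ∧ p + 2 ≤ k then i + k - 2 - p else p)
  · intro p hp hpB
    rw [mem_bset] at hp
    simp only [Finset.mem_insert, Finset.mem_singleton, not_or] at hpB
    obtain ⟨hpN, hbad⟩ := hp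
    rw [Finset.mem_sdiff, mem_bset]
    simp only [Finset.mem_insert, Finset.mem_singleton, not_or]
    by_cases hc1 : i ≤ p ∧ p + 2 ≤ j
    · rw [if_pos hc1]
      have e1 : σ₁ (p + (k - j)) = σ p := by
        rw [hB (p + (k - j)) (by omega) (by omega)]
        congr 1; omega
      have e2 : σ₁ (p + (k - j) + 1) = σ (p + 1) := by
        rw [hB (p + (k - j) + 1) (by omega) (by omega)]
        congr 1; omega
      refine ⟨⟨by omega, by rw [e1, e2]; tauto⟩, by omega, by omega, by omega⟩
    · rw [if_neg hc1]
      by_cases hc2 : j ≤ p ∧ p + 2 ≤ k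
      · rw [if_pos hc2]
        have e1 : σ₁ (i + k - 2 - p) = σ (p + 1) := by
          rw [hA (i + k - 2 - p) (by omega) (by omega)]
          congr 1; omega
        have e2 : σ₁ (i + k - 2 - p + 1) = σ p := by
          rw [hA (i + k - 2 - p + 1) (by omega) (by omega)]
          congr 1; omega
        refine ⟨⟨by omega, by rw [e1, e2]; tauto⟩, by omega, by omega, by omega⟩
      · rw [if_neg hc2]
        have hout : p + 1 < i ∨ k ≤ p := by omega
        have e1 : σ₁ p = σ p := hC p (by omega)
        have e2 : σ₁ (p + 1) = σ (p + 1) := hC (p + 1) (by omega)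
        refine ⟨⟨by omega, by rw [e1, e2]; tauto⟩, by omega, by omega, by omega⟩
  · intro p hp hpB q hq hqB hfq
    rw [mem_bset] at hp hq
    simp only [Finset.mem_insert, Finset.mem_singleton, not_or] at hpB hqB
    split_ifs at hfq <;> omega

lemma revrev_count (N i j k : ℕ) (σ σ₁ : ℕ → ℕ)
    (h1 : 1 ≤ i) (h2 : i < j) (h3 : j < k) (h4 : k ≤ N + 1)
    (hA : ∀ p, i ≤ p → p < j → σ₁ p = σ (i + j - 1 - p))
    (hB : ∀ p, j ≤ p → p < k → σ₁ p = σ (j + k - 1 - p))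
    (hC : ∀ p, p < i ∨ k ≤ p → σ₁ p = σ p) :
    (bset N σ).card ≤ ((bset N σ₁) \ ({i - 1, j - 1, k - 1} : Finset ℕ)).card
      + ((bset N σ) ∩ ({i - 1, j - 1, k - 1} : Finset ℕ)).card := by
  apply card_le_helper (fun p => if i ≤ p ∧ p + 2 ≤ j then i + j - 2 - p
    else if j ≤ p ∧ p + 2 ≤ k then j + k - 2 - p else p)
  · intro p hp hpB
    rw [mem_bset] at hp
    simp only [Finset.mem_insert, Finset.mem_singleton, not_or] at hpB
    obtain ⟨hpN, hbad⟩ := hp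
    rw [Finset.mem_sdiff, mem_bset]
    simp only [Finset.mem_insert, Finset.mem_singleton, not_or]
    by_cases hc1 : i ≤ p ∧ p + 2 ≤ j
    · rw [if_pos hc1]
      have e1 : σ₁ (i + j - 2 - p) = σ (p + 1) := by
        rw [hA (i + j - 2 - p) (by omega) (by omega)]
        congr 1; omega
      have e2 : σ₁ (i + j - 2 - p + 1) = σ p := by
        rw [hA (i + j - 2 - p + 1) (by omega) (by omega)]
        congr 1; omega
      refine ⟨⟨by omega, by rw [e1, e2]; tauto⟩, by omega, by omega, by omega⟩
    · rw [if_neg hc1]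
      by_cases hc2 : j ≤ p ∧ p + 2 ≤ k
      · rw [if_pos hc2]
        have e1 : σ₁ (j + k - 2 - p) = σ (p + 1) := by
          rw [hB (j + k - 2 - p) (by omega) (by omega)]
          congr 1; omega
        have e2 : σ₁ (j + k - 2 - p + 1) = σ p := by
          rw [hB (j + k - 2 - p + 1) (by omega) (by omega)]
          congr 1; omega
        refine ⟨⟨by omega, by rw [e1, e2]; tauto⟩, by omega, by omega, by omega⟩
      · rw [if_neg hc2]
        have hout : p + 1 < i ∨ k ≤ p := by omega
        have e1 : σ₁ p = σ p := hC p (by omega)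
        have e2 : σ₁ (p + 1) = σ (p + 1) := hC (p + 1) (by omega)
        refine ⟨⟨by omega, by rw [e1, e2]; tauto⟩, by omega, by omega, by omega⟩
  · intro p hp hpB q hq hqB hfq
    rw [mem_bset] at hp hq
    simp only [Finset.mem_insert, Finset.mem_singleton, not_or] at hpB hqB
    split_ifs at hfq <;> omega

/-- Real-valued cost of an operation. -/
def opCostR (wr wt : ℝ) (op : RearrOp) : ℝ := if op = RearrOp.rev then wr else wt

/-- Real-valued cost of a sequence of operations. -/
def costR (wr wt : ℝ) (l : List RearrOp) : ℝ := (l.map (opCostR wr wt)).sum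

lemma costR_nil (wr wt : ℝ) : costR wr wt [] = 0 := rfl

lemma costR_cons (wr wt : ℝ) (op : RearrOp) (l : List RearrOp) :
    costR wr wt (op :: l) = opCostR wr wt op + costR wr wt l := by
  simp [costR]

lemma opCostR_nonneg {wr wt : ℝ} (hwr : 0 ≤ wr) (hwt : 0 ≤ wt) (op : RearrOp) :
    0 ≤ opCostR wr wt op := by
  unfold opCostR; split <;> assumption

lemma costR_nonneg {wr wt : ℝ} (hwr : 0 ≤ wr) (hwt : 0 ≤ wt) :
    ∀ l : List RearrOp, 0 ≤ costR wr wt l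
  | [] => le_refl 0
  | op :: l => by
    rw [costR_cons]
    have := opCostR_nonneg hwr hwt op
    have := costR_nonneg hwr hwt l
    linarith

lemma seqCost_eq {wr wt : ℝ} (hwr : 0 ≤ wr) (hwt : 0 ≤ wt) :
    ∀ l : List RearrOp, seqCost wr wt l = ENNReal.ofReal (costR wr wt l)
  | [] => by simp [seqCost, costR]
  | op :: l => by
    have h1 : 0 ≤ opCostR wr wt op := opCostR_nonneg hwr hwt op
    have h2 : 0 ≤ costR wr wt l := costR_nonneg hwr hwt l
    have h3 : opCost wr wt op = ENNReal.ofReal (opCostR wr wt op) := by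
      unfold opCost opCostR; split <;> rfl
    have h4 := seqCost_eq hwr hwt l
    simp only [seqCost, List.map_cons, List.sum_cons, costR_cons] at *
    rw [h3, h4, ENNReal.ofReal_add h1 h2]

/-- `σ` coincides (on positions `0, …, 2n+1`) with the doubling of `π`. -/
def Dbl (n : ℕ) (π σ : ℕ → ℕ) : Prop :=
  σ 0 = 0 ∧ σ (2 * n + 1) = 2 * n + 1 ∧
  ∀ m, 1 ≤ m → m ≤ n → σ (2 * m - 1) = 2 * π m - 1 ∧ σ (2 * m) = 2 * π m

lemma dbl_even {n : ℕ} {π σ : ℕ → ℕ} (hD : Dbl n π σ) :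
    ∀ q, q ≤ 2 * n → q % 2 = 0 → ∃ v, σ q = 2 * v := by
  intro q hq hq2
  obtain ⟨m, rfl⟩ : ∃ m, q = 2 * m := ⟨q / 2, by omega⟩
  rcases Nat.eq_zero_or_pos m with rfl | hm
  · exact ⟨0, by simpa using hD.1⟩
  · exact ⟨π m, (hD.2.2 m hm (by omega)).2⟩

lemma dbl_notbad {n : ℕ} {π σ : ℕ → ℕ} (hD : Dbl n π σ)
    (hb : ∀ m, 1 ≤ m → m ≤ n → 1 ≤ π m) :
    ∀ m, 1 ≤ m → m ≤ n → (2 * m - 1) ∉ bset (2 * n) σ := by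
  intro m h1 h2
  rw [mem_bset]
  have hp := hD.2.2 m h1 h2
  have hb1 := hb m h1 h2
  intro ⟨_, hbad⟩
  apply hbad
  left
  rw [show 2 * m - 1 + 1 = 2 * m from by omega]
  omega

lemma bU_dbl {n : ℕ} {π σ : ℕ → ℕ} (hπ : IsUPerm n π) (hD : Dbl n π σ) :
    bU (2 * n) σ = bTU n π := by
  obtain ⟨h0, hn1, hbd, hinj⟩ := hπ
  have hb1 : ∀ m, 1 ≤ m → m ≤ n → 1 ≤ π m := fun m u v => (hbd m u v).1
  have ha : ∀ m, m ≤ n → σ (2 * m) = 2 * π m := by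
    intro m hm
    rcases Nat.eq_zero_or_pos m with rfl | h
    · simpa [h0] using hD.1
    · exact (hD.2.2 m h hm).2
  have hbv : ∀ m, m ≤ n → σ (2 * m + 1) = 2 * π (m + 1) - 1 := by
    intro m hm
    rcases eq_or_lt_of_le hm with rfl | h
    · rw [hD.2.1, hn1]; omega
    · rw [show 2 * m + 1 = 2 * (m + 1) - 1 from by omega]
      exact (hD.2.2 (m + 1) (by omega) (by omega)).1
  have hg1 : ∀ m, m ≤ n → 1 ≤ π (m + 1) := by
    intro m hm
    rcases eq_or_lt_of_le hm with rfl | h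
    · omega
    · exact (hbd (m + 1) (by omega) (by omega)).1
  have hne : ∀ m, m ≤ n → π m ≠ π (m + 1) := by
    intro m hm heq
    rcases Nat.eq_zero_or_pos m with rfl | h1
    · have := hg1 0 hm; omega
    rcases eq_or_lt_of_le hm with rfl | h2
    · have := (hbd m h1 le_rfl).2; omega
    · exact absurd (hinj m (m + 1) h1 (by omega) (by omega) (by omega) heq) (by omega)
  have key : ∀ m, m ≤ n →
      (¬ (σ (2 * m + 1) = σ (2 * m) + 1 ∨ σ (2 * m) = σ (2 * m + 1) + 1) ↔
        π (m + 1) ≠ π m + 1) := by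
    intro m hm
    rw [ha m hm, hbv m hm]
    have := hg1 m hm
    have := hne m hm
    omega
  rw [bU_eq_bset, bTU]
  rw [show bset (2 * n) σ
      = ((Finset.range (n + 1)).filter (fun i => π (i + 1) ≠ π i + 1)).image
          (fun m => 2 * m) from ?_]
  · rw [Finset.card_image_of_injective _ (fun a b h => by omega)]
  · ext p
    simp only [Finset.mem_image, Finset.mem_filter, Finset.mem_range, mem_bset,
      Nat.lt_succ_iff]
    constructor
    · rintro ⟨hpN, hbad⟩
      rcases Nat.even_or_odd p with ⟨m, hm⟩ | ⟨m, hm⟩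
      · refine ⟨m, ⟨by omega, ?_⟩, by omega⟩
        apply (key m (by omega)).mp
        rw [show 2 * m = p from by omega]
        exact hbad
      · exfalso
        apply dbl_notbad hD hb1 (m + 1) (by omega) (by omega)
        rw [mem_bset, show 2 * (m + 1) - 1 = p from by omega]
        exact ⟨hpN, hbad⟩
    · rintro ⟨m, ⟨hm, hcond⟩, rfl⟩
      exact ⟨by omega, (key m hm).mpr hcond⟩

lemma bU_id {N : ℕ} {σ : ℕ → ℕ} (hσ : ∀ p, p ≤ N + 1 → σ p = p) : bU N σ = 0 := by
  rw [bU_eq_bset]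
  unfold bset
  rw [Finset.card_eq_zero, Finset.filter_eq_empty_iff]
  intro p hp
  rw [Finset.mem_range, Nat.lt_succ_iff] at hp
  rw [hσ p (by omega), hσ (p + 1) (by omega)]
  omega

lemma LB {wr wt : ℝ} (hwr : 0 < wr) (hwt : 0 < wt) (hrat : 2 * wt ≤ 3 * wr) (N : ℕ) :
    ∀ l σ, USorts N l σ → wt * (bU N σ : ℝ) ≤ 3 * costR wr wt l := by
  intro l
  induction l with
  | nil =>
    intro σ hσ
    rw [bU_id hσ]
    simp [costR_nil]
  | cons op l ih =>
    intro σ hσ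
    obtain ⟨σ₁, hop, htail⟩ := hσ
    have hLB := ih σ₁ htail
    rw [costR_cons]
    have hgen : ∀ (B B₁ : Finset ℕ),
        ((bset N σ).card ≤ ((bset N σ₁) \ B₁).card + ((bset N σ) ∩ B).card) →
        bU N σ ≤ bU N σ₁ + B.card := by
      intro B B₁ hcnt
      have hs : ((bset N σ₁) \ B₁).card ≤ (bset N σ₁).card :=
        Finset.card_le_card (Finset.sdiff_subset)
      have hi : ((bset N σ) ∩ B).card ≤ B.card :=
        Finset.card_le_card (Finset.inter_subset_right)
      rw [bU_eq_bset, bU_eq_bset]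
      omega
    cases op with
    | rev =>
      obtain ⟨i, j, h1, h2, h3, hIn, hOut⟩ := hop
      have hcnt := hgen _ _ (rev_count N i j σ σ₁ h1 h2 h3 hIn hOut)
      have h2' : ({i - 1, j} : Finset ℕ).card ≤ 2 := card_pair_le _ _
      have hc : (bU N σ : ℝ) ≤ (bU N σ₁ : ℝ) + 2 := by exact_mod_cast by omega
      have := mul_le_mul_of_nonneg_left hc hwt.le
      have hcR : opCostR wr wt RearrOp.rev = wr := by simp [opCostR]
      rw [hcR]
      nlinarith [hwt.le]
    | transp =>
      obtain ⟨i, j, k, h1, h2, h3, h4, hA, hB, hC⟩ := hop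
      have hcnt := hgen _ _ (transp_count N i j k σ σ₁ h1 h2 h3 h4 hA hB hC)
      have h3' : ({i - 1, j - 1, k - 1} : Finset ℕ).card ≤ 3 := card_triple_le _ _ _
      have hc : (bU N σ : ℝ) ≤ (bU N σ₁ : ℝ) + 3 := by exact_mod_cast by omega
      have := mul_le_mul_of_nonneg_left hc hwt.le
      have hcR : opCostR wr wt RearrOp.transp = wt := by simp [opCostR]
      rw [hcR]
      nlinarith [hwt.le]
    | invtransp =>
      obtain ⟨i, j, k, h1, h2, h3, h4, hOr, hC⟩ := hop
      have hcnt : bU N σ ≤ bU N σ₁ + ({i - 1, j - 1, k - 1} : Finset ℕ).card := by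
        rcases hOr with ⟨hA, hB⟩ | ⟨hA, hB⟩
        · exact hgen _ _ (invtransp1_count N i j k σ σ₁ h1 h2 h3 h4 hA hB hC)
        · exact hgen _ _ (invtransp2_count N i j k σ σ₁ h1 h2 h3 h4 hA hB hC)
      have h3' : ({i - 1, j - 1, k - 1} : Finset ℕ).card ≤ 3 := card_triple_le _ _ _
      have hc : (bU N σ : ℝ) ≤ (bU N σ₁ : ℝ) + 3 := by exact_mod_cast by omega
      have := mul_le_mul_of_nonneg_left hc hwt.le
      have hcR : opCostR wr wt RearrOp.invtransp = wt := by simp [opCostR]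
      rw [hcR]
      nlinarith [hwt.le]
    | revrev =>
      obtain ⟨i, j, k, h1, h2, h3, h4, hA, hB, hC⟩ := hop
      have hcnt := hgen _ _ (revrev_count N i j k σ σ₁ h1 h2 h3 h4 hA hB hC)
      have h3' : ({i - 1, j - 1, k - 1} : Finset ℕ).card ≤ 3 := card_triple_le _ _ _
      have hc : (bU N σ : ℝ) ≤ (bU N σ₁ : ℝ) + 3 := by exact_mod_cast by omega
      have := mul_le_mul_of_nonneg_left hc hwt.le
      have hcR : opCostR wr wt RearrOp.revrev = wt := by simp [opCostR]
      rw [hcR]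
      nlinarith [hwt.le]

lemma dbl_id {n : ℕ} {π σ : ℕ → ℕ} (hD : Dbl n π σ) (hT : ∀ q, q ≤ n + 1 → π q = q) :
    ∀ p, p ≤ 2 * n + 1 → σ p = p := by
  intro p hp
  rcases Nat.even_or_odd p with ⟨m, hm⟩ | ⟨m, hm⟩
  · rcases Nat.eq_zero_or_pos m with rfl | h
    · rw [show p = 0 from by omega]; exact hD.1
    · have := (hD.2.2 m (by omega) (by omega)).2
      have := hT m (by omega)
      rw [show p = 2 * m from by omega]
      omega
  · rcases eq_or_lt_of_le (show m ≤ n from by omega) with rfl | h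
    · rw [show p = 2 * m + 1 from by omega]; exact hD.2.1
    · have := (hD.2.2 (m + 1) (by omega) (by omega)).1
      have := hT (m + 1) (by omega)
      rw [show p = 2 * (m + 1) - 1 from by omega]
      omega

lemma lift (n : ℕ) : ∀ (s : ℕ) (π σ : ℕ → ℕ), Dbl n π σ → UTranspSorts n s π →
    USorts (2 * n) (List.replicate s RearrOp.transp) σ := by
  intro s
  induction s with
  | zero =>
    intro π σ hD hT
    exact fun p hp => dbl_id hD hT p hp
  | succ s ih =>
    intro π σ hD hT
    obtain ⟨π₁, hUT, hrest⟩ := hT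
    obtain ⟨a, b, c, ha1, hab, hbc, hc, hA, hB, hC⟩ := hUT
    rw [List.replicate_succ]
    set I := 2 * a - 1 with hI
    set J := 2 * b - 1 with hJ
    set K := 2 * c - 1 with hK
    set σ₁ : ℕ → ℕ := fun p => if I ≤ p ∧ p < I + (K - J) then σ (p + (J - I))
      else if I + (K - J) ≤ p ∧ p < K then σ (p - (K - J)) else σ p with hσ₁
    refine ⟨σ₁,
      ⟨I, J, K, by omega, by omega, by omega, by omega, ?_, ?_, ?_⟩, ih π₁ _ ?_ hrest⟩
    · intro p hp1 hp2
      simp only [hσ₁]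
      rw [if_pos ⟨hp1, hp2⟩]
    · intro p hp1 hp2
      simp only [hσ₁]
      rw [if_neg (by omega), if_pos ⟨hp1, hp2⟩]
    · intro p hp
      simp only [hσ₁]
      rw [if_neg (by omega), if_neg (by omega)]
    · refine ⟨?_, ?_, ?_⟩
      · simp only [hσ₁]
        rw [if_neg (by omega), if_neg (by omega)]; exact hD.1
      · simp only [hσ₁]
        rw [if_neg (by omega), if_neg (by omega)]; exact hD.2.1
      · intro m hm1 hm2
        simp only [hσ₁]
        by_cases hr1 : a ≤ m ∧ m < a + (c - b)
        · have e1 : σ (2 * m - 1 + (J - I)) = 2 * π (m + (b - a)) - 1 := by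
            rw [show 2 * m - 1 + (J - I) = 2 * (m + (b - a)) - 1 from by omega]
            exact (hD.2.2 (m + (b - a)) (by omega) (by omega)).1
          have e2 : σ (2 * m + (J - I)) = 2 * π (m + (b - a)) := by
            rw [show 2 * m + (J - I) = 2 * (m + (b - a)) from by omega]
            exact (hD.2.2 (m + (b - a)) (by omega) (by omega)).2
          have hp1 : π₁ m = π (m + (b - a)) := hA m hr1.1 hr1.2
          rw [if_pos (show I ≤ 2 * m - 1 ∧ 2 * m - 1 < I + (K - J) from by omega),
            if_pos (show I ≤ 2 * m ∧ 2 * m < I + (K - J) from by omega), hp1]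
          exact ⟨e1, e2⟩
        · by_cases hr2 : a + (c - b) ≤ m ∧ m < c
          · have e1 : σ (2 * m - 1 - (K - J)) = 2 * π (m - (c - b)) - 1 := by
              rw [show 2 * m - 1 - (K - J) = 2 * (m - (c - b)) - 1 from by omega]
              exact (hD.2.2 (m - (c - b)) (by omega) (by omega)).1
            have e2 : σ (2 * m - (K - J)) = 2 * π (m - (c - b)) := by
              rw [show 2 * m - (K - J) = 2 * (m - (c - b)) from by omega]
              exact (hD.2.2 (m - (c - b)) (by omega) (by omega)).2
            have hp1 : π₁ m = π (m - (c - b)) := hB m hr2.1 hr2.2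
            rw [if_neg (by omega), if_pos (show I + (K - J) ≤ 2 * m - 1 ∧ 2 * m - 1 < K from by omega),
              if_neg (by omega), if_pos (show I + (K - J) ≤ 2 * m ∧ 2 * m < K from by omega), hp1]
            exact ⟨e1, e2⟩
          · have hout : m < a ∨ c ≤ m := by omega
            have hp1 : π₁ m = π m := hC m (by omega)
            rw [if_neg (by omega), if_neg (by omega), if_neg (by omega), if_neg (by omega), hp1]
            exact hD.2.2 m hm1 hm2

set_option maxHeartbeats 1000000 in
lemma key (n : ℕ) {wr wt : ℝ} (hwr : 0 < wr) (hwt : 0 < wt) (hrat : 2 * wt ≤ 3 * wr) :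
    ∀ (l : List RearrOp) (π σ : ℕ → ℕ), IsUPerm n π → Dbl n π σ →
      USorts (2 * n) l σ →
      3 * costR wr wt l < wt * ((bTU n π : ℝ) + 1) →
      ∃ s : ℕ, UTranspSorts n s π ∧ 3 * s = bTU n π := by
  intro l
  induction l with
  | nil =>
    intro π σ hπ hD hσ _
    have hid : ∀ p, p ≤ n + 1 → π p = p := by
      intro p hp
      rcases Nat.eq_zero_or_pos p with rfl | hp1
      · exact hπ.1
      rcases eq_or_lt_of_le hp with rfl | hp2
      · exact hπ.2.1
      · have h2 := (hD.2.2 p hp1 (by omega)).2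
        have h3 := hσ (2 * p) (by omega)
        omega
    refine ⟨0, hid, ?_⟩
    have : bTU n π = 0 := by
      unfold bTU
      rw [Finset.card_eq_zero, Finset.filter_eq_empty_iff]
      intro p hp
      rw [Finset.mem_range, Nat.lt_succ_iff] at hp
      rw [hid p (by omega), hid (p + 1) (by omega)]
      omega
    omega
  | cons op l ih =>
    intro π σ hπ hD hσ hcost
    obtain ⟨σ₁, hop, htail⟩ := hσ
    have hbu : bU (2 * n) σ = bTU n π := bU_dbl hπ hD
    have hLB := LB hwr hwt hrat (2 * n) l σ₁ htail
    have hb1 : ∀ m, 1 ≤ m → m ≤ n → 1 ≤ π m := fun m u v => (hπ.2.2.1 m u v).1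
    -- the generic contradiction for a non-transposition-like (tight-impossible) move of
    -- cost `w ≥ 2wt/3 resp. wt` that removes at most `1` resp. `2` breakpoints
    have contra_rev : bU (2 * n) σ ≤ bU (2 * n) σ₁ + 1 →
        opCostR wr wt op = wr → False := by
      intro hk hcR
      rw [costR_cons, hcR] at hcost
      have hcast : (bTU n π : ℝ) ≤ (bU (2 * n) σ₁ : ℝ) + 1 := by
        exact_mod_cast by omega
      have hm := mul_le_mul_of_nonneg_left hcast hwt.le
      rw [mul_add, mul_one] at hm
      linarith
    have contra_tau : bU (2 * n) σ ≤ bU (2 * n) σ₁ + 2 →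
        opCostR wr wt op = wt → False := by
      intro hk hcR
      rw [costR_cons, hcR] at hcost
      have hcast : (bTU n π : ℝ) ≤ (bU (2 * n) σ₁ : ℝ) + 2 := by
        exact_mod_cast by omega
      have hm := mul_le_mul_of_nonneg_left hcast hwt.le
      rw [mul_add] at hm
      norm_num at hm
      linarith
    cases op with
    | rev =>
      exfalso
      obtain ⟨i, j, h1, h2, h3, hIn, hOut⟩ := hop
      have hcnt := rev_count (2 * n) i j σ σ₁ h1 h2 h3 hIn hOut
      have hsd : ((bset (2 * n) σ₁) \ ({i - 1, j} : Finset ℕ)).card ≤ (bset (2 * n) σ₁).card :=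
        Finset.card_le_card (Finset.sdiff_subset)
      have hpair : ({i - 1, j} : Finset ℕ).card ≤ 2 := card_pair_le _ _
      have hintle : ((bset (2 * n) σ) ∩ ({i - 1, j} : Finset ℕ)).card
          ≤ ({i - 1, j} : Finset ℕ).card := Finset.card_le_card (Finset.inter_subset_right)
      apply contra_rev ?_ (by simp [opCostR])
      by_cases hie : i % 2 = 0
      · -- the left cut is inside a pair: at most one breakpoint is cut
        have hnb : (i - 1) ∉ bset (2 * n) σ := by
          have := dbl_notbad hD hb1 (i / 2) (by omega) (by omega)
          rwa [show 2 * (i / 2) - 1 = i - 1 from by omega] at this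
        have := inter_card_le (s := bset (2 * n) σ)
          (B := ({i - 1, j} : Finset ℕ)) (by simp) hnb
        rw [bU_eq_bset, bU_eq_bset]
        omega
      · by_cases hje : j % 2 = 1
        · -- the right cut is inside a pair
          have hnb : j ∉ bset (2 * n) σ := by
            have := dbl_notbad hD hb1 ((j + 1) / 2) (by omega) (by omega)
            rwa [show 2 * ((j + 1) / 2) - 1 = j from by omega] at this
          have := inter_card_le (s := bset (2 * n) σ)
            (B := ({i - 1, j} : Finset ℕ)) (by simp) hnb
          rw [bU_eq_bset, bU_eq_bset]
          omega
        · -- both cuts at pair boundaries: a new breakpoint is created at `i-1`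
          have hσ1a : σ₁ (i - 1) = σ (i - 1) := hOut (i - 1) (Or.inl (by omega))
          have hσ1b : σ₁ (i - 1 + 1) = σ j := by
            rw [show i - 1 + 1 = i from by omega, hIn i le_rfl h2]
            congr 1; omega
          obtain ⟨u, hu⟩ := dbl_even hD (i - 1) (by omega) (by omega)
          obtain ⟨v, hv⟩ := dbl_even hD j (by omega) (by omega)
          have hq : (i - 1) ∈ bset (2 * n) σ₁ := by
            rw [mem_bset, hσ1a, hσ1b, hu, hv]
            exact ⟨by omega, by omega⟩
          have := sdiff_card_le (B := ({i - 1, j} : Finset ℕ)) hq (by simp)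
          rw [bU_eq_bset, bU_eq_bset]
          omega
    | transp =>
      obtain ⟨i, j, k, h1, h2, h3, h4, hA, hB, hC⟩ := hop
      have hcnt := transp_count (2 * n) i j k σ σ₁ h1 h2 h3 h4 hA hB hC
      have hsd : ((bset (2 * n) σ₁) \ ({i - 1, i + (k - j) - 1, k - 1} : Finset ℕ)).card
          ≤ (bset (2 * n) σ₁).card := Finset.card_le_card (Finset.sdiff_subset)
      have htr : ({i - 1, j - 1, k - 1} : Finset ℕ).card ≤ 3 := card_triple_le _ _ _
      have hintle : ((bset (2 * n) σ) ∩ ({i - 1, j - 1, k - 1} : Finset ℕ)).card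
          ≤ ({i - 1, j - 1, k - 1} : Finset ℕ).card :=
        Finset.card_le_card (Finset.inter_subset_right)
      by_cases hodd : i % 2 = 1 ∧ j % 2 = 1 ∧ k % 2 = 1
      · -- all cuts at pair boundaries: descend to a transposition on `π`
        obtain ⟨hi, hj, hk⟩ := hodd
        obtain ⟨a, ha, ha1⟩ : ∃ a, i = 2 * a - 1 ∧ 1 ≤ a := ⟨(i + 1) / 2, by omega, by omega⟩
        obtain ⟨b, hbb, hb1'⟩ : ∃ b, j = 2 * b - 1 ∧ 1 ≤ b := ⟨(j + 1) / 2, by omega, by omega⟩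
        obtain ⟨c, hcc, hc1⟩ : ∃ c, k = 2 * c - 1 ∧ 1 ≤ c := ⟨(k + 1) / 2, by omega, by omega⟩
        set φ : ℕ → ℕ := fun p => if a ≤ p ∧ p < a + (c - b) then p + (b - a)
          else if a + (c - b) ≤ p ∧ p < c then p - (c - b) else p with hφ
        set π₁ : ℕ → ℕ := fun p => π (φ p) with hπ₁
        have hφmem : ∀ p, 1 ≤ p → p ≤ n → 1 ≤ φ p ∧ φ p ≤ n := by
          intro p hp1 hp2
          simp only [hφ]
          split_ifs <;> omega
        have hUT : UTransp n π π₁ := by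
          refine ⟨a, b, c, by omega, by omega, by omega, by omega, ?_, ?_, ?_⟩
          · intro p hp1 hp2
            simp only [hπ₁, hφ]
            rw [if_pos ⟨hp1, hp2⟩]
          · intro p hp1 hp2
            simp only [hπ₁, hφ]
            rw [if_neg (by omega), if_pos ⟨hp1, hp2⟩]
          · intro p hp
            simp only [hπ₁, hφ]
            rw [if_neg (by omega), if_neg (by omega)]
        have hP1 : IsUPerm n π₁ := by
          refine ⟨?_, ?_, ?_, ?_⟩
          · simp only [hπ₁, hφ]
            rw [if_neg (by omega), if_neg (by omega)]
            exact hπ.1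
          · simp only [hπ₁, hφ]
            rw [if_neg (by omega), if_neg (by omega)]
            exact hπ.2.1
          · intro p hp1 hp2
            have h := hφmem p hp1 hp2
            exact hπ.2.2.1 (φ p) h.1 h.2
          · intro p q hp1 hp2 hq1 hq2 heq
            have h1' := hφmem p hp1 hp2
            have h2' := hφmem q hq1 hq2
            have hfeq : φ p = φ q := hπ.2.2.2 (φ p) (φ q) h1'.1 h1'.2 h2'.1 h2'.2 heq
            simp only [hφ] at hfeq
            split_ifs at hfeq <;> omega
        have hD1 : Dbl n π₁ σ₁ := by
          refine ⟨?_, ?_, ?_⟩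
          · rw [hC 0 (Or.inl (by omega))]; exact hD.1
          · rw [hC (2 * n + 1) (Or.inr (by omega))]; exact hD.2.1
          · intro m hm1 hm2
            by_cases hr1 : a ≤ m ∧ m < a + (c - b)
            · have e1 : σ₁ (2 * m - 1) = σ (2 * (m + (b - a)) - 1) := by
                rw [hA (2 * m - 1) (by omega) (by omega)]
                congr 1; omega
              have e2 : σ₁ (2 * m) = σ (2 * (m + (b - a))) := by
                rw [hA (2 * m) (by omega) (by omega)]
                congr 1; omega
              have hd := hD.2.2 (m + (b - a)) (by omega) (by omega)
              have hπm : π₁ m = π (m + (b - a)) := by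
                simp only [hπ₁, hφ]; rw [if_pos hr1]
              rw [e1, e2, hπm]
              exact hd
            · by_cases hr2 : a + (c - b) ≤ m ∧ m < c
              · have e1 : σ₁ (2 * m - 1) = σ (2 * (m - (c - b)) - 1) := by
                  rw [hB (2 * m - 1) (by omega) (by omega)]
                  congr 1; omega
                have e2 : σ₁ (2 * m) = σ (2 * (m - (c - b))) := by
                  rw [hB (2 * m) (by omega) (by omega)]
                  congr 1; omega
                have hd := hD.2.2 (m - (c - b)) (by omega) (by omega)
                have hπm : π₁ m = π (m - (c - b)) := by
                  simp only [hπ₁, hφ]; rw [if_neg (by omega), if_pos hr2]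
                rw [e1, e2, hπm]
                exact hd
              · have e1 : σ₁ (2 * m - 1) = σ (2 * m - 1) := hC _ (by omega)
                have e2 : σ₁ (2 * m) = σ (2 * m) := hC _ (by omega)
                have hπm : π₁ m = π m := by
                  simp only [hπ₁, hφ]; rw [if_neg (by omega), if_neg (by omega)]
                rw [e1, e2, hπm]
                exact hD.2.2 m hm1 hm2
        have hbu1 : bU (2 * n) σ₁ = bTU n π₁ := bU_dbl hP1 hD1
        rw [costR_cons, show opCostR wr wt RearrOp.transp = wt from by simp [opCostR]] at hcost
        have hup : bTU n π ≤ bTU n π₁ + 3 := by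
          rw [← hbu, ← hbu1, bU_eq_bset, bU_eq_bset]
          omega
        have hLB' : wt * (bTU n π₁ : ℝ) ≤ 3 * costR wr wt l := by
          rw [← hbu1]; exact hLB
        have hdown : bTU n π₁ + 3 ≤ bTU n π := by
          have hx : wt * (bTU n π₁ : ℝ) < wt * ((bTU n π : ℝ) - 2) := by
            apply lt_of_le_of_lt hLB'
            nlinarith
          have hy : (bTU n π₁ : ℝ) < (bTU n π : ℝ) - 2 :=
            lt_of_mul_lt_mul_left hx hwt.le
          have hz : ((bTU n π₁ + 2 : ℕ) : ℝ) < ((bTU n π : ℕ) : ℝ) := by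
            push_cast; linarith
          have := Nat.cast_lt.mp hz
          omega
        have hcost' : 3 * costR wr wt l < wt * ((bTU n π₁ : ℝ) + 1) := by
          have hupR : (bTU n π : ℝ) ≤ (bTU n π₁ : ℝ) + 3 := by exact_mod_cast hup
          nlinarith
        obtain ⟨s, hs1, hs2⟩ := ih π₁ σ₁ hP1 hD1 htail hcost'
        exact ⟨s + 1, ⟨π₁, hUT, hs1⟩, by omega⟩
      · -- some cut is inside a pair: impossible for a (near-)tight sequence
        exfalso
        apply contra_tau ?_ (by simp [opCostR])
        have hex : ∃ e, e ∈ ({i - 1, j - 1, k - 1} : Finset ℕ) ∧ e ∉ bset (2 * n) σ := by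
          by_cases hie : i % 2 = 0
          · refine ⟨i - 1, by simp, ?_⟩
            have := dbl_notbad hD hb1 (i / 2) (by omega) (by omega)
            rwa [show 2 * (i / 2) - 1 = i - 1 from by omega] at this
          · by_cases hje : j % 2 = 0
            · refine ⟨j - 1, by simp, ?_⟩
              have := dbl_notbad hD hb1 (j / 2) (by omega) (by omega)
              rwa [show 2 * (j / 2) - 1 = j - 1 from by omega] at this
            · refine ⟨k - 1, by simp, ?_⟩
              have := dbl_notbad hD hb1 (k / 2) (by omega) (by omega)
              rwa [show 2 * (k / 2) - 1 = k - 1 from by omega] at this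
        obtain ⟨e, heB, hee⟩ := hex
        have := inter_card_le (s := bset (2 * n) σ) heB hee
        rw [bU_eq_bset, bU_eq_bset]
        omega
    | invtransp =>
      exfalso
      obtain ⟨i, j, k, h1, h2, h3, h4, hOr, hC⟩ := hop
      apply contra_tau ?_ (by simp [opCostR])
      have htr : ({i - 1, j - 1, k - 1} : Finset ℕ).card ≤ 3 := card_triple_le _ _ _
      by_cases hodd : i % 2 = 1 ∧ j % 2 = 1 ∧ k % 2 = 1
      · -- all cuts at pair boundaries, but an inverse transposition then creates
        -- a breakpoint between two even values
        obtain ⟨hi, hj, hk⟩ := hodd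
        rcases hOr with ⟨hA, hB⟩ | ⟨hA, hB⟩
        · have hcnt := invtransp1_count (2 * n) i j k σ σ₁ h1 h2 h3 h4 hA hB hC
          have e1 : σ₁ (i + (k - j) - 1) = σ (k - 1) := by
            rw [hA (i + (k - j) - 1) (by omega) (by omega)]
            congr 1; omega
          have e2 : σ₁ (i + (k - j) - 1 + 1) = σ (j - 1) := by
            rw [hB (i + (k - j) - 1 + 1) (by omega) (by omega)]
            congr 1; omega
          obtain ⟨u, hu⟩ := dbl_even hD (k - 1) (by omega) (by omega)
          obtain ⟨v, hv⟩ := dbl_even hD (j - 1) (by omega) (by omega)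
          have hq : (i + (k - j) - 1) ∈ bset (2 * n) σ₁ := by
            rw [mem_bset, e1, e2, hu, hv]
            exact ⟨by omega, by omega⟩
          have hqB : (i + (k - j) - 1) ∈ ({i - 1, i + (k - j) - 1, k - 1} : Finset ℕ) := by
            simp
          have hs1 := sdiff_card_le hq hqB
          have hintle : ((bset (2 * n) σ) ∩ ({i - 1, j - 1, k - 1} : Finset ℕ)).card
              ≤ ({i - 1, j - 1, k - 1} : Finset ℕ).card :=
            Finset.card_le_card (Finset.inter_subset_right)
          rw [bU_eq_bset, bU_eq_bset]
          omega
        · have hcnt := invtransp2_count (2 * n) i j k σ σ₁ h1 h2 h3 h4 hA hB hC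
          have e1 : σ₁ (i - 1) = σ (i - 1) := hC (i - 1) (Or.inl (by omega))
          have e2 : σ₁ (i - 1 + 1) = σ (k - 1) := by
            rw [show i - 1 + 1 = i from by omega, hA i le_rfl (by omega)]
            congr 1; omega
          obtain ⟨u, hu⟩ := dbl_even hD (i - 1) (by omega) (by omega)
          obtain ⟨v, hv⟩ := dbl_even hD (k - 1) (by omega) (by omega)
          have hq : (i - 1) ∈ bset (2 * n) σ₁ := by
            rw [mem_bset, e1, e2, hu, hv]
            exact ⟨by omega, by omega⟩
          have hqB : (i - 1) ∈ ({i - 1, i + (k - j) - 1, k - 1} : Finset ℕ) := by simp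
          have hs1 := sdiff_card_le hq hqB
          have hintle : ((bset (2 * n) σ) ∩ ({i - 1, j - 1, k - 1} : Finset ℕ)).card
              ≤ ({i - 1, j - 1, k - 1} : Finset ℕ).card :=
            Finset.card_le_card (Finset.inter_subset_right)
          rw [bU_eq_bset, bU_eq_bset]
          omega
      · have hcnt : (bset (2 * n) σ).card
            ≤ ((bset (2 * n) σ₁) \ ({i - 1, i + (k - j) - 1, k - 1} : Finset ℕ)).card
              + ((bset (2 * n) σ) ∩ ({i - 1, j - 1, k - 1} : Finset ℕ)).card := by
          rcases hOr with ⟨hA, hB⟩ | ⟨hA, hB⟩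
          · exact invtransp1_count (2 * n) i j k σ σ₁ h1 h2 h3 h4 hA hB hC
          · exact invtransp2_count (2 * n) i j k σ σ₁ h1 h2 h3 h4 hA hB hC
        have hsd : ((bset (2 * n) σ₁) \ ({i - 1, i + (k - j) - 1, k - 1} : Finset ℕ)).card
            ≤ (bset (2 * n) σ₁).card := Finset.card_le_card (Finset.sdiff_subset)
        have hex : ∃ e, e ∈ ({i - 1, j - 1, k - 1} : Finset ℕ) ∧ e ∉ bset (2 * n) σ := by
          by_cases hie : i % 2 = 0
          · refine ⟨i - 1, by simp, ?_⟩
            have := dbl_notbad hD hb1 (i / 2) (by omega) (by omega)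
            rwa [show 2 * (i / 2) - 1 = i - 1 from by omega] at this
          · by_cases hje : j % 2 = 0
            · refine ⟨j - 1, by simp, ?_⟩
              have := dbl_notbad hD hb1 (j / 2) (by omega) (by omega)
              rwa [show 2 * (j / 2) - 1 = j - 1 from by omega] at this
            · refine ⟨k - 1, by simp, ?_⟩
              have := dbl_notbad hD hb1 (k / 2) (by omega) (by omega)
              rwa [show 2 * (k / 2) - 1 = k - 1 from by omega] at this
        obtain ⟨e, heB, hee⟩ := hex
        have := inter_card_le (s := bset (2 * n) σ) heB hee
        rw [bU_eq_bset, bU_eq_bset]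
        omega
    | revrev =>
      exfalso
      obtain ⟨i, j, k, h1, h2, h3, h4, hA, hB, hC⟩ := hop
      apply contra_tau ?_ (by simp [opCostR])
      have hcnt := revrev_count (2 * n) i j k σ σ₁ h1 h2 h3 h4 hA hB hC
      have htr : ({i - 1, j - 1, k - 1} : Finset ℕ).card ≤ 3 := card_triple_le _ _ _
      have hintle : ((bset (2 * n) σ) ∩ ({i - 1, j - 1, k - 1} : Finset ℕ)).card
          ≤ ({i - 1, j - 1, k - 1} : Finset ℕ).card :=
        Finset.card_le_card (Finset.inter_subset_right)
      by_cases hodd : i % 2 = 1 ∧ j % 2 = 1 ∧ k % 2 = 1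
      · obtain ⟨hi, hj, hk⟩ := hodd
        have e1 : σ₁ (i - 1) = σ (i - 1) := hC (i - 1) (Or.inl (by omega))
        have e2 : σ₁ (i - 1 + 1) = σ (j - 1) := by
          rw [show i - 1 + 1 = i from by omega, hA i le_rfl (by omega)]
          congr 1; omega
        obtain ⟨u, hu⟩ := dbl_even hD (i - 1) (by omega) (by omega)
        obtain ⟨v, hv⟩ := dbl_even hD (j - 1) (by omega) (by omega)
        have hq : (i - 1) ∈ bset (2 * n) σ₁ := by
          rw [mem_bset, e1, e2, hu, hv]
          exact ⟨by omega, by omega⟩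
        have hqB : (i - 1) ∈ ({i - 1, j - 1, k - 1} : Finset ℕ) := by simp
        have hs1 := sdiff_card_le hq hqB
        rw [bU_eq_bset, bU_eq_bset]
        omega
      · have hsd : ((bset (2 * n) σ₁) \ ({i - 1, j - 1, k - 1} : Finset ℕ)).card
            ≤ (bset (2 * n) σ₁).card := Finset.card_le_card (Finset.sdiff_subset)
        have hex : ∃ e, e ∈ ({i - 1, j - 1, k - 1} : Finset ℕ) ∧ e ∉ bset (2 * n) σ := by
          by_cases hie : i % 2 = 0
          · refine ⟨i - 1, by simp, ?_⟩
            have := dbl_notbad hD hb1 (i / 2) (by omega) (by omega)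
            rwa [show 2 * (i / 2) - 1 = i - 1 from by omega] at this
          · by_cases hje : j % 2 = 0
            · refine ⟨j - 1, by simp, ?_⟩
              have := dbl_notbad hD hb1 (j / 2) (by omega) (by omega)
              rwa [show 2 * (j / 2) - 1 = j - 1 from by omega] at this
            · refine ⟨k - 1, by simp, ?_⟩
              have := dbl_notbad hD hb1 (k / 2) (by omega) (by omega)
              rwa [show 2 * (k / 2) - 1 = k - 1 from by omega] at this
        obtain ⟨e, heB, hee⟩ := hex
        have := inter_card_le (s := bset (2 * n) σ) heB hee
        rw [bU_eq_bset, bU_eq_bset]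
        omega

lemma mem_M6 (op : RearrOp) : op ∈ M6 := by
  cases op <;> simp [M6]

lemma costR_replicate (wr wt : ℝ) (s : ℕ) :
    costR wr wt (List.replicate s RearrOp.transp) = s * wt := by
  induction s with
  | zero => simp [costR_nil]
  | succ s ih =>
    rw [List.replicate_succ, costR_cons, ih]
    simp [opCostR]
    ring

end AuxProof

/-- Let `π` be an unsigned permutation of size `n` with `b_τ(π)`
transposition breakpoints, let `π'` be the unsigned permutation of size `2n` defined by
`π'_{2i−1} = 2π_i − 1` and `π'_{2i} = 2π_i` for `1 ≤ i ≤ n`, and let `w_ρ, w_τ` be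
positive weights with `w_τ/w_ρ ≤ 3/2`. Then there exists a sequence `S` of transpositions
transforming `π` into the identity with `3·|S| = b_τ(π)` if and only if
`3·d^w_{M6}(π') ≤ w_τ · b_τ(π)`, where `M6` acts on unsigned permutations of size `2n`. -/
theorem transposition_sorting_iff_weighted_unsigned_distance
    (n : ℕ) (π : ℕ → ℕ) (hπ : IsUPerm n π)
    (π' : ℕ → ℕ) (hπ' : IsUPerm (2 * n) π')
    (hdef : ∀ i : ℕ, 1 ≤ i → i ≤ n →
      π' (2 * i - 1) = 2 * π i - 1 ∧ π' (2 * i) = 2 * π i)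
    (wr wt : ℝ) (hwr : 0 < wr) (hwt : 0 < wt) (hratio : wt / wr ≤ 3 / 2) :
    (∃ s : ℕ, UTranspSorts n s π ∧ 3 * s = bTU n π) ↔
      3 * uWDist (2 * n) M6 wr wt π' ≤ ENNReal.ofReal (wt * (bTU n π : ℝ)) := by
  have hDbl : Dbl n π π' := ⟨hπ'.1, hπ'.2.1, fun m h1 h2 => hdef m h1 h2⟩
  have hrat2 : 2 * wt ≤ 3 * wr := by
    have h2 := (div_le_div_iff₀ hwr (show (0:ℝ) < 2 from by norm_num)).mp hratio
    linarith
  constructor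
  · rintro ⟨s, hs, h3s⟩
    have hUS := lift n s π π' hDbl hs
    have hle : uWDist (2 * n) M6 wr wt π'
        ≤ seqCost wr wt (List.replicate s RearrOp.transp) := by
      apply sInf_le
      exact ⟨List.replicate s RearrOp.transp, fun op _ => mem_M6 op, hUS, rfl⟩
    have hval : seqCost wr wt (List.replicate s RearrOp.transp)
        = ENNReal.ofReal ((s : ℝ) * wt) := by
      rw [seqCost_eq hwr.le hwt.le, costR_replicate]
    calc 3 * uWDist (2 * n) M6 wr wt π'
        ≤ 3 * ENNReal.ofReal ((s : ℝ) * wt) := by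
          rw [← hval]
          exact mul_le_mul_right hle 3
      _ = ENNReal.ofReal (wt * (bTU n π : ℝ)) := by
          rw [show (3 : ENNReal) = ENNReal.ofReal (3 : ℝ) from by norm_num,
            ← ENNReal.ofReal_mul (by norm_num)]
          congr 1
          have : ((bTU n π : ℕ) : ℝ) = 3 * (s : ℝ) := by exact_mod_cast h3s.symm
          rw [this]
          ring
  · intro h
    have hlt : uWDist (2 * n) M6 wr wt π'
        < ENNReal.ofReal (wt * ((bTU n π : ℝ) + 1) / 3) := by
      have hd3 : uWDist (2 * n) M6 wr wt π' ≤ ENNReal.ofReal (wt * (bTU n π : ℝ)) / 3 := by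
        rw [ENNReal.le_div_iff_mul_le (Or.inl (by norm_num)) (Or.inl (by norm_num))]
        rwa [mul_comm]
      apply lt_of_le_of_lt hd3
      rw [show ENNReal.ofReal (wt * (bTU n π : ℝ)) / 3
          = ENNReal.ofReal (wt * (bTU n π : ℝ) / 3) from by
        rw [ENNReal.ofReal_div_of_pos (by norm_num)]
        norm_num]
      apply (ENNReal.ofReal_lt_ofReal_iff (by positivity)).mpr
      have : wt * (bTU n π : ℝ) < wt * ((bTU n π : ℝ) + 1) := by nlinarith
      linarith
    unfold uWDist at hlt
    obtain ⟨cc, ⟨l, hM, hUS, rfl⟩, hclt⟩ := sInf_lt_iff.mp hlt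
    rw [seqCost_eq hwr.le hwt.le] at hclt
    have hcR : costR wr wt l < wt * ((bTU n π : ℝ) + 1) / 3 :=
      (ENNReal.ofReal_lt_ofReal_iff_of_nonneg (costR_nonneg hwr.le hwt.le l)).mp hclt
    exact key n hwr hwt hrat2 l π π' hπ hDbl hUS (by linarith)
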